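/- For a single-qubit depolarizing channel with depolarizing probability p ∈ [0,1], the entanglement-assisted symbol-based classical capacity C_{E,s}(p) = 2 + (1-p)·log₂(1-p) + p·log₂(p/3) is greater than or equal to the bit-based capacity C_{E,b}(p) = 2 + (2 - 4p/3)·log₂(1 - 2p/3) + (4p/3)·log₂(2p/3), with equality iff p = 0 or p = 3/4. -/
import Mathlib


noncomputable def CEs (p : ℝ) : ℝ :=
  2 + (1 - p) * Real.logb 2 (1 - p) + p * Real.logb 2 (p / 3)

noncomputable def CEb (p : ℝ) : ℝ :=
  2 + (2 - 4 * p / 3) * Real.logb 2 (1 - 2 * p / 3) + (4 * p / 3) * Real.logb 2 (2 * p / 3)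

noncomputable def Dv (p : ℝ) : ℝ :=
  (1 - p) * (Real.log (1 - p) - Real.log ((1 - 2*p/3) * (1 - 2*p/3)))
  + 2 * ((p/3) * (Real.log (p/3) - Real.log ((1 - 2*p/3) * (2*p/3))))
  + (p/3) * (Real.log (p/3) - Real.log ((2*p/3) * (2*p/3)))

lemma gibbs_le {x y : ℝ} (hx : 0 ≤ x) (hy : 0 < y) :
    x - y ≤ x * (Real.log x - Real.log y) := by
  rcases eq_or_lt_of_le hx with h | h
  · simp [← h]; linarith
  · have h1 : Real.log (y / x) ≤ y / x - 1 :=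
      Real.log_le_sub_one_of_pos (div_pos hy h)
    rw [Real.log_div (ne_of_gt hy) (ne_of_gt h)] at h1
    have h2 : x * (Real.log y - Real.log x) ≤ x * (y / x - 1) :=
      mul_le_mul_of_nonneg_left h1 h.le
    have h3 : x * (y / x - 1) = y - x := by field_simp
    nlinarith

lemma gibbs_lt {x y : ℝ} (hx : 0 < x) (hy : 0 < y) (hne : y ≠ x) :
    x - y < x * (Real.log x - Real.log y) := by
  have hne' : y / x ≠ 1 := by
    intro h; apply hne; field_simp at h; linarith
  have h1 : Real.log (y / x) < y / x - 1 :=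
    Real.log_lt_sub_one_of_pos (div_pos hy hx) hne'
  rw [Real.log_div (ne_of_gt hy) (ne_of_gt hx)] at h1
  have h2 : x * (Real.log y - Real.log x) < x * (y / x - 1) :=
    mul_lt_mul_of_pos_left h1 hx
  have h3 : x * (y / x - 1) = y - x := by field_simp
  nlinarith

lemma identity (p : ℝ) (hp0 : 0 ≤ p) (hp1 : p ≤ 1) :
    (CEs p - CEb p) * Real.log 2 = Dv p := by
  have hL : Real.log 2 ≠ 0 := ne_of_gt (Real.log_pos (by norm_num))
  have expand : (CEs p - CEb p) * Real.log 2 =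
      (1-p) * Real.log (1-p) + p * Real.log (p/3)
      - (2 - 4*p/3) * Real.log (1 - 2*p/3) - (4*p/3) * Real.log (2*p/3) := by
    simp only [CEs, CEb, Real.logb]
    field_simp
    ring
  rcases eq_or_lt_of_le hp0 with h0 | h0
  · rw [expand, ← h0]
    simp [Dv]
  · have ha : (0:ℝ) < 1 - 2*p/3 := by linarith
    have hb : (0:ℝ) < 2*p/3 := by linarith
    rw [expand]
    simp only [Dv]
    rw [Real.log_mul (ne_of_gt ha) (ne_of_gt ha),
        Real.log_mul (ne_of_gt ha) (ne_of_gt hb),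
        Real.log_mul (ne_of_gt hb) (ne_of_gt hb)]
    ring

theorem stmt_0 (p : ℝ) (hp0 : 0 ≤ p) (hp1 : p ≤ 1) :
    CEb p ≤ CEs p ∧ (CEs p = CEb p ↔ p = 0 ∨ p = 3 / 4) := by
  have hL : (0:ℝ) < Real.log 2 := Real.log_pos (by norm_num)
  have hid := identity p hp0 hp1
  have ha : (0:ℝ) < 1 - 2*p/3 := by linarith
  have hDnn : 0 ≤ Dv p := by
    rcases eq_or_lt_of_le hp0 with h0 | h0
    · rw [← hid, ← h0]; simp [CEs, CEb]
    · have hb : (0:ℝ) < 2*p/3 := by linarith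
      have t1 : (1-p) - (1 - 2*p/3)*(1 - 2*p/3) ≤
          (1-p) * (Real.log (1-p) - Real.log ((1 - 2*p/3)*(1 - 2*p/3))) :=
        gibbs_le (by linarith) (mul_pos ha ha)
      have t2 : (p/3) - (1 - 2*p/3)*(2*p/3) ≤
          (p/3) * (Real.log (p/3) - Real.log ((1 - 2*p/3)*(2*p/3))) :=
        gibbs_le (by linarith) (mul_pos ha hb)
      have t3 : (p/3) - (2*p/3)*(2*p/3) ≤
          (p/3) * (Real.log (p/3) - Real.log ((2*p/3)*(2*p/3))) :=
        gibbs_le (by linarith) (mul_pos hb hb)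
      simp only [Dv]
      nlinarith
  have hDpos : 0 < p → p ≠ 3/4 → 0 < Dv p := by
    intro h0 hne
    have hb : (0:ℝ) < 2*p/3 := by linarith
    have t1 : (1-p) - (1 - 2*p/3)*(1 - 2*p/3) ≤
        (1-p) * (Real.log (1-p) - Real.log ((1 - 2*p/3)*(1 - 2*p/3))) :=
      gibbs_le (by linarith) (mul_pos ha ha)
    have t2 : (p/3) - (1 - 2*p/3)*(2*p/3) ≤
        (p/3) * (Real.log (p/3) - Real.log ((1 - 2*p/3)*(2*p/3))) :=
      gibbs_le (by linarith) (mul_pos ha hb)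
    have hne3 : (2*p/3)*(2*p/3) ≠ p/3 := by
      intro h
      apply hne
      have : p * (4*p - 3) = 0 := by nlinarith
      rcases mul_eq_zero.1 this with h' | h'
      · exact absurd h' (ne_of_gt h0)
      · linarith
    have t3 : (p/3) - (2*p/3)*(2*p/3) <
        (p/3) * (Real.log (p/3) - Real.log ((2*p/3)*(2*p/3))) :=
      gibbs_lt (by linarith) (mul_pos hb hb) hne3
    simp only [Dv]
    nlinarith
  constructor
  · nlinarith [hid, hDnn, hL]
  · constructor
    · intro h
      by_contra hc
      push_neg at hc
      obtain ⟨h1, h2⟩ := hc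
      have hp0' : 0 < p := lt_of_le_of_ne hp0 (Ne.symm h1)
      have := hDpos hp0' h2
      rw [← hid, h] at this
      simp at this
    · rintro (h | h) <;> subst h
      · have : Dv 0 = 0 := by simp [Dv]
        have h2 := identity 0 le_rfl (by norm_num)
        rw [this] at h2
        have := mul_eq_zero.1 h2
        rcases this with h' | h'
        · linarith [sub_eq_zero.1 h']
        · exact absurd h' (ne_of_gt hL)
      · have : Dv (3/4) = 0 := by norm_num [Dv]
        have h2 := identity (3/4) (by norm_num) (by norm_num)
        rw [this] at h2
        rcases mul_eq_zero.1 h2 with h' | h'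
        · linarith [sub_eq_zero.1 h']
        · exact absurd h' (ne_of_gt hL)
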